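/- Let n ≥ 1, N ≥ 1 and d ≥ 2N + 3n − 1 be integers. Let p_1, …, p_N ∈ ℂ³, p_i = (x_i, y_i, z_i), be points with (x_i, y_i) ≠ (0,0) for all i and with the classes [x_i : y_i] ∈ P¹ pairwise distinct. Then the ℂ-subspace {f ∈ V_{d,n} : f is singular at p_1, …, p_N} has dimension 4d + 4 − 6n − 3N; that is, being singular at the N points imposes exactly 3N independent linear conditions on V_{d,n}. -/

import Mathlib

open MvPolynomial

noncomputable section

/-- The weights on the variables `x, y, z`: `deg x = deg y = 1`, `deg z = n`. -/
def wt (n : ℕ) : Fin 3 → ℕ := ![1, 1, n]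

/-- The subspace of `ℂ[x,y,z]` of polynomials whose degree in `z` is at most `h`. -/
def degZle (h : ℕ) : Submodule ℂ (MvPolynomial (Fin 3) ℂ) where
  carrier := {f | f.degreeOf 2 ≤ h}
  zero_mem' := by simp [Set.mem_setOf_eq, degreeOf_zero]
  add_mem' := by
    intro f g hf hg
    exact le_trans (degreeOf_add_le _ _ _) (max_le hf hg)
  smul_mem' := by
    intro c f hf
    rw [Set.mem_setOf_eq, smul_eq_C_mul]
    exact le_trans (degreeOf_C_mul_le _ _ _) hf

/-- `V^{(h)}_{d,n}`: the space of polynomials in `ℂ[x,y,z]` that are weighted homogeneous of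
degree `d` for the weights `deg x = deg y = 1`, `deg z = n`, and have degree at most `h` in `z`.
This is the space of global sections of `O(hEₙ + dFₙ)` on the Hirzebruch surface `𝔽ₙ`. -/
def Vh (h d n : ℕ) : Submodule ℂ (MvPolynomial (Fin 3) ℂ) :=
  weightedHomogeneousSubmodule ℂ (wt n) d ⊓ degZle h

/-- `V_{d,n}`, the space of global sections of `O(3Eₙ + dFₙ)` on `𝔽ₙ`. -/
def V (d n : ℕ) : Submodule ℂ (MvPolynomial (Fin 3) ℂ) := Vh 3 d n

/-- `f` is singular at the point `p`: all partial derivatives of `f` vanish at `p`. -/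
def SingularAt {σ : Type*} (f : MvPolynomial σ ℂ) (p : σ → ℂ) : Prop :=
  ∀ i, eval p (pderiv i f) = 0

/-- The subspace of polynomials singular at every point of the family `p`. -/
def singSub {ι σ : Type*} (p : ι → σ → ℂ) : Submodule ℂ (MvPolynomial σ ℂ) where
  carrier := {f | ∀ j, SingularAt f (p j)}
  zero_mem' := by intro j i; simp
  add_mem' := by
    intro f g hf hg j i
    simp [map_add, hf j i, hg j i]
  smul_mem' := by
    intro c f hf j i
    simp [smul_eq_C_mul, pderiv_C_mul, hf j i]

-- === Auxiliary lemmas ===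

lemma prod_sub_single (q : Fin 3 → ℂ) (m : Fin 3 →₀ ℕ) (i : Fin 3) (h : m i ≠ 0) :
    q i * Finsupp.prod (m - Finsupp.single i 1) (fun j e => q j ^ e) =
      Finsupp.prod m (fun j e => q j ^ e) := by
  rw [Finsupp.prod_fintype _ _ (fun j => pow_zero (q j)),
    Finsupp.prod_fintype _ _ (fun j => pow_zero (q j))]
  rw [← Finset.mul_prod_erase Finset.univ _ (Finset.mem_univ i),
    ← Finset.mul_prod_erase Finset.univ (fun j => q j ^ m j) (Finset.mem_univ i), ← mul_assoc]
  congr 1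
  · obtain ⟨k, hk⟩ := Nat.exists_eq_succ_of_ne_zero h
    rw [Finsupp.tsub_apply, Finsupp.single_eq_same, hk, Nat.succ_sub_one]
    rw [pow_succ]; ring
  · apply Finset.prod_congr rfl
    intro j hj
    rw [Finsupp.tsub_apply, Finsupp.single_eq_of_ne' (Finset.ne_of_mem_erase hj).symm,
      Nat.sub_zero]

lemma euler_monomial (w : Fin 3 → ℕ) (q : Fin 3 → ℂ) (m : Fin 3 →₀ ℕ) (r : ℂ) :
    ∑ i, (w i : ℂ) * q i * eval q (pderiv i (monomial m r)) =
      (Finsupp.weight w m : ℂ) * eval q (monomial m r) := by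
  have key : ∀ i : Fin 3, (w i : ℂ) * q i * eval q (pderiv i (monomial m r)) =
      ((w i * m i : ℕ) : ℂ) * eval q (monomial m r) := by
    intro i
    rw [pderiv_monomial, eval_monomial, eval_monomial]
    rcases eq_or_ne (m i) 0 with h | h
    · simp [h]
    · push_cast
      rw [show (w i : ℂ) * q i * (r * (m i) * _) = (w i) * (m i) *
          (r * (q i * Finsupp.prod (m - Finsupp.single i 1) fun j e => q j ^ e)) by ring,
        prod_sub_single q m i h]
  rw [Finset.sum_congr rfl (fun i _ => key i), ← Finset.sum_mul]
  congr 1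
  rw [Finsupp.weight_apply, Finsupp.sum_fintype]
  · push_cast; apply Finset.sum_congr rfl; intro i _; rw [smul_eq_mul]; push_cast; ring
  · intro i; rw [zero_smul]

lemma euler {w : Fin 3 → ℕ} {f : MvPolynomial (Fin 3) ℂ} {δ : ℕ}
    (hf : IsWeightedHomogeneous w f δ) (q : Fin 3 → ℂ) :
    ∑ i, (w i : ℂ) * q i * eval q (pderiv i f) = (δ : ℂ) * eval q f := by
  conv_lhs => rw [← support_sum_monomial_coeff f]
  conv_rhs => rw [← support_sum_monomial_coeff f]
  rw [map_sum]
  simp only [map_sum, Finset.mul_sum]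
  rw [Finset.sum_comm]
  apply Finset.sum_congr rfl
  intro m hm
  rw [euler_monomial]
  congr 2
  exact hf (mem_support_iff.mp hm)

lemma weight_wt (n : ℕ) (m : Fin 3 →₀ ℕ) :
    Finsupp.weight (wt n) m = m 0 + m 1 + m 2 * n := by
  rw [Finsupp.weight_apply, Finsupp.sum_fintype _ _ (fun j => zero_smul ℕ (wt n j)),
    Fin.sum_univ_three]
  simp [wt, smul_eq_mul]

lemma weight_single (w : Fin 3 → ℕ) (j : Fin 3) (k : ℕ) :
    Finsupp.weight w (Finsupp.single j k) = k * w j := by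
  rw [Finsupp.weight_apply, Finsupp.sum_single_index (by rw [zero_smul]), smul_eq_mul]

lemma eval_smul' (q : Fin 3 → ℂ) (r : ℂ) (f : MvPolynomial (Fin 3) ℂ) :
    eval q (r • f) = r * eval q f := by
  rw [smul_eq_C_mul, map_mul, eval_C]

lemma eval_pderiv_smul (q : Fin 3 → ℂ) (i : Fin 3) (r : ℂ) (f : MvPolynomial (Fin 3) ℂ) :
    eval q (pderiv i (r • f)) = r * eval q (pderiv i f) := by
  rw [(pderiv i).map_smul, eval_smul']

lemma fprod_add (q : Fin 3 → ℂ) (m m' : Fin 3 →₀ ℕ) :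
    Finsupp.prod (m + m') (fun j e => q j ^ e)
      = Finsupp.prod m (fun j e => q j ^ e) * Finsupp.prod m' (fun j e => q j ^ e) :=
  Finsupp.prod_add_index (fun j _ => pow_zero (q j)) (fun j _ e e' => pow_add (q j) e e')

lemma fprod_single (q : Fin 3 → ℂ) (j : Fin 3) (k : ℕ) :
    Finsupp.prod (Finsupp.single j k) (fun j e => q j ^ e) = q j ^ k :=
  Finsupp.prod_single_index (pow_zero (q j))

lemma prod_whs {ι : Type*} (w : Fin 3 → ℕ) (s : Finset ι) (f : ι → MvPolynomial (Fin 3) ℂ)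
    (e : ι → ℕ) (h : ∀ k ∈ s, (f k).IsWeightedHomogeneous w (e k)) :
    (∏ k ∈ s, f k).IsWeightedHomogeneous w (∑ k ∈ s, e k) := by
  classical
  induction s using Finset.induction_on with
  | empty => simpa using isWeightedHomogeneous_one ℂ w
  | @insert a s' hk ih =>
    rw [Finset.prod_insert hk, Finset.sum_insert hk]
    exact (h a (Finset.mem_insert_self a s')).mul
      (ih fun k hks => h k (Finset.mem_insert_of_mem hks))

lemma degreeOf2_monomial_le (m : Fin 3 →₀ ℕ) (r : ℂ) :
    degreeOf 2 (monomial m r) ≤ m 2 := by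
  rcases eq_or_ne r 0 with h | h
  · simp [h]
  · rw [degreeOf_monomial_eq _ _ h]


def expo (d n : ℕ) (k : Fin 4) (i : ℕ) : Fin 3 →₀ ℕ :=
  Finsupp.single 0 i + Finsupp.single 1 (d - k.val * n - i) + Finsupp.single 2 k.val

lemma expo_apply0 (d n : ℕ) (k : Fin 4) (i : ℕ) : expo d n k i 0 = i := by
  simp [expo]
lemma expo_apply1 (d n : ℕ) (k : Fin 4) (i : ℕ) : expo d n k i 1 = d - k.val * n - i := by
  simp [expo, Finsupp.single_apply]
lemma expo_apply2 (d n : ℕ) (k : Fin 4) (i : ℕ) : expo d n k i 2 = k.val := by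
  simp [expo, Finsupp.single_apply]

lemma expo_inj (d n : ℕ) :
    Function.Injective (fun t : Σ k : Fin 4, Fin (d + 1 - k.val * n) =>
      expo d n t.1 t.2.val) := by
  rintro ⟨k, i⟩ ⟨k', i'⟩ h
  simp only at h
  have h2 := congrArg (fun m => m 2) h
  have h0 := congrArg (fun m => m 0) h
  simp only [expo_apply2, expo_apply0] at h2 h0
  have hk : k = k' := Fin.ext h2
  subst hk
  simp [Fin.ext h0]

lemma expo_mem (d n : ℕ) (h3 : 3 * n ≤ d) (k : Fin 4) (i : Fin (d + 1 - k.val * n)) :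
    monomial (expo d n k i.val) (1 : ℂ) ∈ V d n := by
  have hk : k.val ≤ 3 := by omega
  have hkn : k.val * n ≤ d := le_trans (Nat.mul_le_mul_right n hk) h3
  have hi : i.val ≤ d - k.val * n := by have := i.isLt; omega
  constructor
  · apply isWeightedHomogeneous_monomial
    rw [weight_wt, expo_apply0, expo_apply1, expo_apply2]
    omega
  · show degreeOf 2 _ ≤ 3
    rw [degreeOf_monomial_eq _ _ (one_ne_zero), expo_apply2]
    exact hk

def basV (d n : ℕ) (h3 : 3 * n ≤ d) :
    Module.Basis (Σ k : Fin 4, Fin (d + 1 - k.val * n)) ℂ ↥(V d n) := by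
  refine Module.Basis.mk (v := fun t => ⟨monomial (expo d n t.1 t.2.val) 1, expo_mem d n h3 t.1 t.2⟩)
    ?_ ?_
  · apply LinearIndependent.of_comp (V d n).subtype
    have : ((V d n).subtype ∘ fun t : Σ k : Fin 4, Fin (d + 1 - k.val * n) =>
        (⟨monomial (expo d n t.1 t.2.val) 1, expo_mem d n h3 t.1 t.2⟩ : ↥(V d n)))
        = fun t => (basisMonomials (Fin 3) ℂ) (expo d n t.1 t.2.val) := by
      funext t; simp [coe_basisMonomials]
    rw [this]
    exact (basisMonomials (Fin 3) ℂ).linearIndependent.comp _ (expo_inj d n)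
  · rintro ⟨f, hf⟩ -
    have key : f ∈ Submodule.span ℂ (Set.range fun t : Σ k : Fin 4, Fin (d + 1 - k.val * n) =>
        monomial (expo d n t.1 t.2.val) (1 : ℂ)) := by
      rw [← support_sum_monomial_coeff f]
      apply Submodule.sum_mem
      intro m hm
      have hw : Finsupp.weight (wt n) m = d := hf.1 (mem_support_iff.mp hm)
      have hz : m 2 ≤ 3 := le_trans (monomial_le_degreeOf 2 hm) hf.2
      rw [weight_wt] at hw
      have hkn : m 2 * n ≤ d := by omega
      have hk4 : m 2 < 4 := by omega
      have hi : m 0 < d + 1 - m 2 * n := by omega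
      have hme : expo d n ⟨m 2, hk4⟩ ((⟨m 0, hi⟩ : Fin (d + 1 - m 2 * n)).val) = m := by
        ext j
        match j with
        | 0 => rw [expo_apply0]
        | 1 => rw [expo_apply1]; simp only [Fin.val_mk]; omega
        | 2 => rw [expo_apply2]
      have : monomial m (coeff m f) = coeff m f • monomial m (1 : ℂ) := by
        rw [smul_monomial, smul_eq_mul, mul_one]
      rw [this]
      exact Submodule.smul_mem _ _ (Submodule.subset_span
        ⟨⟨⟨m 2, hk4⟩, ⟨m 0, hi⟩⟩, by simp only [hme]⟩)
    rw [show (Set.range fun t : Σ k : Fin 4, Fin (d + 1 - k.val * n) =>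
          monomial (expo d n t.1 t.2.val) (1 : ℂ)) =
        (V d n).subtype '' (Set.range fun t : Σ k : Fin 4, Fin (d + 1 - k.val * n) =>
          (⟨monomial (expo d n t.1 t.2.val) 1, expo_mem d n h3 t.1 t.2⟩ : ↥(V d n)))
        from by rw [← Set.range_comp]; rfl,
      ← Submodule.map_span] at key
    obtain ⟨y, hy, hy2⟩ := key
    have : y = ⟨f, hf⟩ := Subtype.ext hy2
    rwa [this] at hy

lemma finrank_V (d n : ℕ) (h3 : 3 * n ≤ d) :
    Module.finrank ℂ ↥(V d n) = 4 * d + 4 - 6 * n := by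
  rw [Module.finrank_eq_card_basis (basV d n h3), Fintype.card_sigma]
  rw [Fin.sum_univ_four]
  simp only [Fintype.card_fin]
  omega


set_option maxHeartbeats 2000000 in
lemma key_point (n d' e : ℕ) (hn : 1 ≤ n) (hd' : 3 * n + 1 ≤ d')
    (q : Fin 3 → ℂ) (i0 i1 : Fin 3)
    (hcase : (i0 = 0 ∧ i1 = 1) ∨ (i0 = 1 ∧ i1 = 0))
    (ha : q i0 ≠ 0)
    (F : MvPolynomial (Fin 3) ℂ)
    (hF : F.IsWeightedHomogeneous (wt n) e)
    (hc0 : eval q F ≠ 0)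
    (t : Fin 3 → ℂ) :
    ∃ G, (G.IsWeightedHomogeneous (wt n) d' ∧ G ∈ degZle 1) ∧
      ∀ i, eval q (pderiv i (F * G)) = t i := by
  have h01 : i0 ≠ i1 := by rcases hcase with ⟨h, h'⟩ | ⟨h, h'⟩ <;> subst h <;> subst h' <;> decide
  have h02 : i0 ≠ 2 := by rcases hcase with ⟨h, h'⟩ | ⟨h, h'⟩ <;> subst h <;> decide
  have h12 : i1 ≠ 2 := by rcases hcase with ⟨h, h'⟩ | ⟨h, h'⟩ <;> subst h' <;> decide
  have hw0 : wt n i0 = 1 := by rcases hcase with ⟨h, h'⟩ | ⟨h, h'⟩ <;> subst h <;> rfl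
  have hw1 : wt n i1 = 1 := by rcases hcase with ⟨h, h'⟩ | ⟨h, h'⟩ <;> subst h' <;> rfl
  have hw2 : wt n 2 = n := rfl
  set m1 : Fin 3 →₀ ℕ := Finsupp.single i0 d' with hm1
  set m2 : Fin 3 →₀ ℕ := Finsupp.single i0 (d' - 1) + Finsupp.single i1 1 with hm2
  set m3 : Fin 3 →₀ ℕ := Finsupp.single i0 (d' - n) + Finsupp.single 2 1 with hm3
  set g1 : MvPolynomial (Fin 3) ℂ := monomial m1 1 with hg1
  set g2 : MvPolynomial (Fin 3) ℂ := monomial m2 1 with hg2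
  set g3 : MvPolynomial (Fin 3) ℂ := monomial m3 1 with hg3
  have hde : ((e : ℂ) + (d' : ℂ)) ≠ 0 := by
    have : (((e + d' : ℕ)) : ℂ) ≠ 0 := Nat.cast_ne_zero.mpr (by omega)
    push_cast at this; exact this
  set c0 : ℂ := eval q F with hc0def
  set v1 : ℂ := eval q (pderiv i1 F) with hv1
  set v2 : ℂ := eval q (pderiv 2 F) with hv2
  set S : ℂ := (q 0 * t 0 + q 1 * t 1 + n * q 2 * t 2) / ((e : ℂ) + (d' : ℂ)) with hS
  set γ : ℂ := (t 2 - v2 * (S / c0)) / (c0 * q i0 ^ (d' - n)) with hγ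
  set β : ℂ := (t i1 - v1 * (S / c0)) / (c0 * q i0 ^ (d' - 1)) with hβ
  set α : ℂ := (S / c0 - β * q i0 ^ (d' - 1) * q i1 - γ * q i0 ^ (d' - n) * q 2) / q i0 ^ d'
    with hα
  set G : MvPolynomial (Fin 3) ℂ := α • g1 + β • g2 + γ • g3 with hG
  have hp1 : q i0 ^ d' ≠ 0 := pow_ne_zero _ ha
  have hp2 : q i0 ^ (d' - 1) ≠ 0 := pow_ne_zero _ ha
  have hp3 : q i0 ^ (d' - n) ≠ 0 := pow_ne_zero _ ha
  -- evals
  have E1 : eval q g1 = q i0 ^ d' := by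
    rw [hg1, eval_monomial, one_mul, hm1, fprod_single]
  have E2 : eval q g2 = q i0 ^ (d' - 1) * q i1 := by
    rw [hg2, eval_monomial, one_mul, hm2, fprod_add, fprod_single, fprod_single, pow_one]
  have E3 : eval q g3 = q i0 ^ (d' - n) * q 2 := by
    rw [hg3, eval_monomial, one_mul, hm3, fprod_add, fprod_single, fprod_single, pow_one]
  have D11 : eval q (pderiv i1 g1) = 0 := by
    rw [hg1, pderiv_monomial, hm1, Finsupp.single_eq_of_ne' h01, one_mul, Nat.cast_zero,
      monomial_zero, map_zero]
  have D12 : eval q (pderiv i1 g2) = q i0 ^ (d' - 1) := by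
    rw [hg2, pderiv_monomial, hm2, add_tsub_cancel_right]
    rw [Finsupp.add_apply, Finsupp.single_eq_of_ne' h01, Finsupp.single_eq_same]
    rw [eval_monomial, fprod_single]
    norm_num
  have D13 : eval q (pderiv i1 g3) = 0 := by
    rw [hg3, pderiv_monomial, hm3, Finsupp.add_apply, Finsupp.single_eq_of_ne' h01,
      Finsupp.single_eq_of_ne' (Ne.symm h12)]
    simp
  have D21 : eval q (pderiv 2 g1) = 0 := by
    rw [hg1, pderiv_monomial, hm1, Finsupp.single_eq_of_ne' h02, one_mul, Nat.cast_zero,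
      monomial_zero, map_zero]
  have D22 : eval q (pderiv 2 g2) = 0 := by
    rw [hg2, pderiv_monomial, hm2, Finsupp.add_apply, Finsupp.single_eq_of_ne' h02,
      Finsupp.single_eq_of_ne' h12]
    simp
  have D23 : eval q (pderiv 2 g3) = q i0 ^ (d' - n) := by
    rw [hg3, pderiv_monomial, hm3, add_tsub_cancel_right]
    rw [Finsupp.add_apply, Finsupp.single_eq_of_ne' h02, Finsupp.single_eq_same]
    rw [eval_monomial, fprod_single]
    norm_num
  -- membership
  have hGhom : G.IsWeightedHomogeneous (wt n) d' := by
    have hh1 : g1.IsWeightedHomogeneous (wt n) d' := by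
      apply isWeightedHomogeneous_monomial
      rw [hm1, weight_single, hw0, mul_one]
    have hh2 : g2.IsWeightedHomogeneous (wt n) d' := by
      apply isWeightedHomogeneous_monomial
      rw [hm2, map_add, weight_single, weight_single, hw0, hw1]
      omega
    have hh3 : g3.IsWeightedHomogeneous (wt n) d' := by
      apply isWeightedHomogeneous_monomial
      rw [hm3, map_add, weight_single, weight_single, hw0, hw2]
      have hnd : n ≤ d' := by omega
      omega
    rw [hG]
    have := Submodule.add_mem (weightedHomogeneousSubmodule ℂ (wt n) d')
      (Submodule.add_mem _
        (Submodule.smul_mem _ α (by rw [mem_weightedHomogeneousSubmodule]; exact hh1))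
        (Submodule.smul_mem _ β (by rw [mem_weightedHomogeneousSubmodule]; exact hh2)))
      (Submodule.smul_mem _ γ (by rw [mem_weightedHomogeneousSubmodule]; exact hh3))
    rwa [mem_weightedHomogeneousSubmodule] at this
  have hGz : G ∈ degZle 1 := by
    have z1 : g1 ∈ degZle 1 := by
      show degreeOf 2 g1 ≤ 1
      rw [hg1, degreeOf_monomial_eq _ _ (one_ne_zero), hm1, Finsupp.single_eq_of_ne' h02]
      omega
    have z2 : g2 ∈ degZle 1 := by
      show degreeOf 2 g2 ≤ 1
      rw [hg2, degreeOf_monomial_eq _ _ (one_ne_zero), hm2, Finsupp.add_apply,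
        Finsupp.single_eq_of_ne' h02, Finsupp.single_eq_of_ne' h12]
      omega
    have z3 : g3 ∈ degZle 1 := by
      show degreeOf 2 g3 ≤ 1
      rw [hg3, degreeOf_monomial_eq _ _ (one_ne_zero), hm3, Finsupp.add_apply,
        Finsupp.single_eq_of_ne' h02, Finsupp.single_eq_same]
    exact Submodule.add_mem _ (Submodule.add_mem _ (Submodule.smul_mem _ _ z1)
      (Submodule.smul_mem _ _ z2)) (Submodule.smul_mem _ _ z3)
  -- computed evals of G
  have hevG : eval q G = S / c0 := by
    simp only [hG, map_add, eval_smul', E1, E2, E3, hα]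
    field_simp
    ring
  have hd1G : eval q (pderiv i1 G) = β * q i0 ^ (d' - 1) := by
    simp only [hG, map_add, eval_pderiv_smul, D11, D12, D13]
    ring
  have hd2G : eval q (pderiv 2 G) = γ * q i0 ^ (d' - n) := by
    simp only [hG, map_add, eval_pderiv_smul, D21, D22, D23]
    ring
  -- main equations
  have hf1 : eval q (pderiv i1 (F * G)) = t i1 := by
    rw [pderiv_mul, map_add, map_mul, map_mul, hevG, hd1G, hβ, ← hv1, ← hc0def]
    field_simp
    ring
  have hf2 : eval q (pderiv 2 (F * G)) = t 2 := by
    rw [pderiv_mul, map_add, map_mul, map_mul, hevG, hd2G, hγ, ← hv2, ← hc0def]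
    field_simp
    ring
  have hfev : eval q (F * G) = S := by
    rw [map_mul, hevG, ← hc0def, mul_div_cancel₀ _ hc0]
  have heul := euler (hF.mul hGhom) q
  rw [Fin.sum_univ_three, hfev] at heul
  have hwt0 : wt n 0 = 1 := rfl
  have hwt1 : wt n 1 = 1 := rfl
  rw [hwt0, hwt1, hw2] at heul
  push_cast at heul
  have hSe : ((e : ℂ) + (d' : ℂ)) * S = q 0 * t 0 + q 1 * t 1 + n * q 2 * t 2 := by
    rw [hS, mul_div_cancel₀ _ hde]
  have hf0 : eval q (pderiv i0 (F * G)) = t i0 := by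
    rcases hcase with ⟨h, h'⟩ | ⟨h, h'⟩ <;> subst h <;> subst h'
    · apply mul_left_cancel₀ ha
      rw [hf1, hf2] at heul
      linear_combination heul + hSe
    · apply mul_left_cancel₀ ha
      rw [hf1, hf2] at heul
      linear_combination heul + hSe
  refine ⟨G, ⟨hGhom, hGz⟩, ?_⟩
  intro i
  rcases hcase with ⟨h, h'⟩ | ⟨h, h'⟩ <;> subst h <;> subst h' <;> fin_cases i
  exacts [hf0, hf1, hf2, hf1, hf0, hf2]


def evalGrad {N : ℕ} (p : Fin N → Fin 3 → ℂ) :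
    MvPolynomial (Fin 3) ℂ →ₗ[ℂ] (Fin N → Fin 3 → ℂ) where
  toFun f := fun j i => eval (p j) (pderiv i f)
  map_add' f g := by funext j i; simp
  map_smul' c f := by
    funext j i
    simp [eval_pderiv_smul]

lemma fdV (d n : ℕ) (h3 : 3 * n ≤ d) : FiniteDimensional ℂ ↥(V d n) :=
  Module.Finite.of_basis (basV d n h3)

set_option maxHeartbeats 1000000 in
/-- Lemma 2.5: for `n ≥ 1`, `N ≥ 1`, `d ≥ 2N + 3n - 1`, and `N` points of `𝔽ₙ` off the
exceptional section lying on pairwise distinct lines of the ruling, the subspace of `V_{d,n}`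
of polynomials singular at all `N` points has dimension `4d + 4 - 6n - 3N`. -/
theorem finrank_singular_subspace (n N d : ℕ) (hn : 1 ≤ n) (hN : 1 ≤ N)
    (hd : 2 * N + 3 * n - 1 ≤ d)
    (p : Fin N → Fin 3 → ℂ)
    (hp : ∀ j, (p j 0, p j 1) ≠ (0, 0))
    (hdist : ∀ j j', j ≠ j' → p j 0 * p j' 1 ≠ p j' 0 * p j 1) :
    Module.finrank ℂ ↥(V d n ⊓ singSub p) = 4 * d + 4 - 6 * n - 3 * N := by
  classical
  have hd3 : 3 * n ≤ d := by omega
  have claim : ∀ (j0 : Fin N) (t : Fin 3 → ℂ), ∃ f ∈ V d n,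
      (∀ i, eval (p j0) (pderiv i f) = t i) ∧
      ∀ k : Fin N, k ≠ j0 → ∀ i, eval (p k) (pderiv i f) = 0 := by
    intro j0 t
    set L : Fin N → MvPolynomial (Fin 3) ℂ := fun k =>
      monomial (Finsupp.single 0 1) (p k 1) - monomial (Finsupp.single 1 1) (p k 0) with hL
    set F : MvPolynomial (Fin 3) ℂ := ∏ k ∈ Finset.univ.erase j0, (L k * L k) with hF
    have hLhom : ∀ k, (L k).IsWeightedHomogeneous (wt n) 1 := by
      intro k
      have h1 : (monomial (Finsupp.single 0 1) (p k 1) : MvPolynomial (Fin 3) ℂ) ∈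
          weightedHomogeneousSubmodule ℂ (wt n) 1 :=
        isWeightedHomogeneous_monomial _ _ _ (by rw [weight_single]; rfl)
      have h2 : (monomial (Finsupp.single 1 1) (p k 0) : MvPolynomial (Fin 3) ℂ) ∈
          weightedHomogeneousSubmodule ℂ (wt n) 1 :=
        isWeightedHomogeneous_monomial _ _ _ (by rw [weight_single]; rfl)
      have := Submodule.sub_mem _ h1 h2
      rwa [mem_weightedHomogeneousSubmodule] at this
    have hFhom : F.IsWeightedHomogeneous (wt n) (2 * (N - 1)) := by
      have h2 : ∀ k ∈ Finset.univ.erase j0,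
          (L k * L k).IsWeightedHomogeneous (wt n) ((fun _ => 2) k) := by
        intro k _
        have := (hLhom k).mul (hLhom k)
        norm_num at this
        exact this
      have := prod_whs (wt n) (Finset.univ.erase j0) (fun k => L k * L k) (fun _ => 2) h2
      rwa [Finset.sum_const, Finset.card_erase_of_mem (Finset.mem_univ j0),
        Finset.card_univ, Fintype.card_fin, smul_eq_mul, Nat.mul_comm] at this
    have hLz : ∀ k, degreeOf 2 (L k) ≤ 0 := by
      intro k
      have hrew : L k = monomial (Finsupp.single 0 1) (p k 1)
          + monomial (Finsupp.single 1 1) (-(p k 0)) := by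
        rw [hL]
        simp only [map_neg, sub_eq_add_neg]
      rw [hrew]
      refine le_trans (degreeOf_add_le _ _ _) (max_le ?_ ?_) <;>
        refine le_trans (degreeOf2_monomial_le _ _) ?_ <;>
        rw [Finsupp.single_eq_of_ne (by decide)]
    have hFz : F ∈ degZle 0 := by
      show degreeOf 2 F ≤ 0
      refine le_trans (degreeOf_prod_le _ _ _) ?_
      have hterm : ∀ k ∈ Finset.univ.erase j0, degreeOf 2 (L k * L k) ≤ 0 := by
        intro k _
        refine le_trans (degreeOf_mul_le _ _ _) ?_
        have := hLz k
        omega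
      have := Finset.sum_le_sum hterm
      simpa using this
    have hevL0 : ∀ k, eval (p k) (L k) = 0 := by
      intro k
      rw [hL]
      simp only [map_sub, eval_monomial, fprod_single, pow_one]
      ring
    have hvanish : ∀ k, k ≠ j0 →
        eval (p k) F = 0 ∧ ∀ i, eval (p k) (pderiv i F) = 0 := by
      intro k hk
      have hkmem : k ∈ Finset.univ.erase j0 := Finset.mem_erase.mpr ⟨hk, Finset.mem_univ k⟩
      have hfact : F = (L k * L k) * ∏ x ∈ (Finset.univ.erase j0).erase k, (L x * L x) := by
        rw [hF, ← Finset.mul_prod_erase _ _ hkmem]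
      constructor
      · rw [hfact]
        simp only [map_mul, hevL0, zero_mul]
      · intro i
        rw [hfact]
        simp only [pderiv_mul, map_add, map_mul, hevL0, zero_mul, mul_zero, add_zero,
          zero_add]
    have hc0 : eval (p j0) F ≠ 0 := by
      rw [hF, map_prod]
      apply Finset.prod_ne_zero_iff.mpr
      intro k hkmem
      have hk : k ≠ j0 := (Finset.mem_erase.mp hkmem).1
      have hLne : eval (p j0) (L k) ≠ 0 := by
        rw [hL]
        simp only [map_sub, eval_monomial, fprod_single, pow_one]
        intro hzero
        apply hdist j0 k (Ne.symm hk)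
        have : p k 1 * (1 * p j0 0) = p k 0 * (1 * p j0 1) := by
          rw [sub_eq_zero] at hzero
          linear_combination hzero
        linear_combination this
      rw [map_mul]
      exact mul_ne_zero hLne hLne
    set d' : ℕ := d - 2 * (N - 1) with hd'def
    have hd' : 3 * n + 1 ≤ d' := by omega
    have hsum : 2 * (N - 1) + d' = d := by omega
    have hcases2 : p j0 0 ≠ 0 ∨ p j0 1 ≠ 0 := by
      by_contra hcon
      push_neg at hcon
      exact hp j0 (by rw [hcon.1, hcon.2])
    obtain ⟨G, ⟨hGhom, hGz⟩, hGev⟩ :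
        ∃ G, (G.IsWeightedHomogeneous (wt n) d' ∧ G ∈ degZle 1) ∧
          ∀ i, eval (p j0) (pderiv i (F * G)) = t i := by
      rcases hcases2 with ha | hb
      · exact key_point n d' (2 * (N - 1)) hn hd' (p j0) 0 1 (Or.inl ⟨rfl, rfl⟩) ha F hFhom hc0 t
      · exact key_point n d' (2 * (N - 1)) hn hd' (p j0) 1 0 (Or.inr ⟨rfl, rfl⟩) hb F hFhom hc0 t
    refine ⟨F * G, ⟨?_, ?_⟩, hGev, ?_⟩
    · have := hFhom.mul hGhom
      rw [hsum] at this
      exact this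
    · show degreeOf 2 (F * G) ≤ 3
      refine le_trans (degreeOf_mul_le _ _ _) ?_
      have h1 : degreeOf 2 F ≤ 0 := hFz
      have h2 : degreeOf 2 G ≤ 1 := hGz
      omega
    · intro k hk i
      rw [pderiv_mul, map_add, map_mul, map_mul, (hvanish k hk).1, (hvanish k hk).2 i]
      ring
  -- Step 2: surjectivity of the evaluation of gradients
  have hsurj : ∀ t : Fin N → Fin 3 → ℂ, ∃ f ∈ V d n,
      ∀ j i, eval (p j) (pderiv i f) = t j i := by
    intro t
    choose f hfV hfgrad hfvan using fun j => claim j (t j)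
    refine ⟨∑ j, f j, Submodule.sum_mem _ (fun j _ => hfV j), ?_⟩
    intro j i
    rw [map_sum, map_sum, Finset.sum_eq_single j]
    · exact hfgrad j i
    · intro k _ hkj
      exact hfvan k j (Ne.symm hkj) i
    · intro h
      exact absurd (Finset.mem_univ j) h
  -- Step 3: rank-nullity
  haveI : FiniteDimensional ℂ ↥(V d n) := fdV d n hd3
  set Φ' : ↥(V d n) →ₗ[ℂ] (Fin N → Fin 3 → ℂ) := (evalGrad p).domRestrict (V d n) with hΦ'
  have hrange : LinearMap.range Φ' = ⊤ := by
    rw [LinearMap.range_eq_top]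
    intro t
    obtain ⟨f, hfV, hf⟩ := hsurj t
    refine ⟨⟨f, hfV⟩, ?_⟩
    funext j i
    exact hf j i
  have hker : LinearMap.ker Φ' = (V d n ⊓ singSub p).comap (V d n).subtype := by
    ext x
    simp only [LinearMap.mem_ker, Submodule.mem_comap, Submodule.coe_subtype,
      Submodule.mem_inf]
    constructor
    · intro h
      refine ⟨x.2, ?_⟩
      intro j i
      have := congrFun (congrFun h j) i
      simpa [hΦ', evalGrad] using this
    · intro h
      funext j i
      exact h.2 j i
  have hrn := LinearMap.finrank_range_add_finrank_ker Φ'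
  rw [hrange, hker] at hrn
  have e1 : Module.finrank ℂ ↥(⊤ : Submodule ℂ (Fin N → Fin 3 → ℂ)) = 3 * N := by
    rw [finrank_top, Module.finrank_pi_fintype]
    simp [Module.finrank_pi]
    omega
  have e2 : Module.finrank ℂ ↥((V d n ⊓ singSub p).comap (V d n).subtype)
      = Module.finrank ℂ ↥(V d n ⊓ singSub p) :=
    (Submodule.comapSubtypeEquivOfLe inf_le_left).finrank_eq
  rw [e1, e2, finrank_V d n hd3] at hrn
  omega

end
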